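/- Let P ⊆ ℝ^n be a bounded Lebesgue-measurable set and f : P → ℝ^m a measurable mapping. Suppose that for every ε > 0 there exist a closed set Q ⊆ P with λ(P \ Q) < ε and a C¹-smooth mapping g : ℝ^n → ℝ^m such that g = f on Q. Then f is approximately differentiable at almost every point of P. -/

import Mathlib

open MeasureTheory Metric Filter Set Function
open scoped Topology ENNReal NNReal

/-- `Y` has density `d` at the point `x` with respect to the measure `μ`. -/
def HasDensityAt {X : Type*} [PseudoMetricSpace X] [MeasurableSpace X]
    (μ : Measure X) (Y : Set X) (x : X) (d : ℝ≥0∞) : Prop :=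
  Tendsto (fun r : ℝ => μ (Y ∩ ball x r) / μ (ball x r)) (𝓝[>] (0 : ℝ)) (𝓝 d)

/-- `L` is an approximate differential of `f` (as a map defined on `E`) at `a`. -/
def IsApproxDifferential {n m : ℕ} (E : Set (EuclideanSpace ℝ (Fin n)))
    (f : EuclideanSpace ℝ (Fin n) → EuclideanSpace ℝ (Fin m))
    (a : EuclideanSpace ℝ (Fin n))
    (L : EuclideanSpace ℝ (Fin n) →ₗ[ℝ] EuclideanSpace ℝ (Fin m)) : Prop :=
  ∀ ε : ℝ, 0 < ε →
    HasDensityAt volume {x ∈ E | ε * ‖x - a‖ < ‖f x - f a - L (x - a)‖} a 0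

lemma vol_ball_eq_closedBall {n : ℕ} (a : EuclideanSpace ℝ (Fin n)) {r : ℝ} (hr : 0 < r) :
    volume (ball a r) = volume (closedBall a r) := by
  have hs : volume (sphere a r) = 0 :=
    MeasureTheory.Measure.addHaar_sphere_of_ne_zero volume a hr.ne'
  apply le_antisymm (measure_mono ball_subset_closedBall)
  calc volume (closedBall a r) ≤ volume (ball a r ∪ sphere a r) := by
        rw [ball_union_sphere]
      _ ≤ volume (ball a r) + volume (sphere a r) := measure_union_le _ _
      _ = volume (ball a r) := by rw [hs, add_zero]

lemma key_approx {n m : ℕ} {P Q : Set (EuclideanSpace ℝ (Fin n))}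
    (hQ : MeasurableSet Q)
    {f g : EuclideanSpace ℝ (Fin n) → EuclideanSpace ℝ (Fin m)}
    (hg : ContDiff ℝ 1 g) (hgf : EqOn g f Q)
    {a : EuclideanSpace ℝ (Fin n)} (ha : a ∈ Q)
    (hd : Tendsto (fun r => volume (Q ∩ closedBall a r) / volume (closedBall a r))
      (𝓝[>] (0 : ℝ)) (𝓝 1)) :
    IsApproxDifferential P f a (fderiv ℝ g a).toLinearMap := by
  intro ε hε
  set L : EuclideanSpace ℝ (Fin n) →L[ℝ] EuclideanSpace ℝ (Fin m) := fderiv ℝ g a with hL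
  have hdiff : HasFDerivAt g L a := (hg.differentiable one_ne_zero a).hasFDerivAt
  have hlo := hdiff.isLittleO.def hε
  rw [Metric.eventually_nhds_iff] at hlo
  obtain ⟨δ, hδ, hδ'⟩ := hlo
  -- upper bound function
  set u : ℝ → ℝ≥0∞ := fun r =>
    (1 : ℝ≥0∞) - volume (Q ∩ closedBall a r) / volume (closedBall a r) with hu
  have hu0 : Tendsto u (𝓝[>] (0 : ℝ)) (𝓝 0) := by
    have := ENNReal.Tendsto.sub (tendsto_const_nhds (x := (1 : ℝ≥0∞))) hd
      (Or.inl ENNReal.one_ne_top)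
    simpa using this
  have hbound : ∀ᶠ r in 𝓝[>] (0 : ℝ),
      volume ({x ∈ P | ε * ‖x - a‖ < ‖f x - f a - L (x - a)‖} ∩ ball a r) / volume (ball a r)
        ≤ u r := by
    filter_upwards [Ioo_mem_nhdsGT_of_mem (Set.left_mem_Ico.2 hδ)] with r hr
    have hr0 : 0 < r := hr.1
    have hvne : volume (closedBall a r) ≠ 0 := (measure_closedBall_pos volume a hr0).ne'
    have hvtop : volume (closedBall a r) ≠ ∞ := measure_closedBall_lt_top.ne
    -- bad points in the ball are outside Q
    have hsub : {x ∈ P | ε * ‖x - a‖ < ‖f x - f a - L (x - a)‖} ∩ ball a r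
        ⊆ closedBall a r \ Q := by
      rintro x ⟨⟨hxP, hxbad⟩, hxball⟩
      refine ⟨ball_subset_closedBall hxball, fun hxQ => ?_⟩
      have hdist : dist x a < δ := lt_of_lt_of_le (mem_ball.1 hxball) hr.2.le
      have := hδ' hdist
      rw [hgf hxQ, hgf ha] at this
      exact absurd this (not_le.2 hxbad)
    have heq : u r = volume (closedBall a r \ Q) / volume (closedBall a r) := by
      have hsum : volume (closedBall a r \ Q) / volume (closedBall a r)
          + volume (Q ∩ closedBall a r) / volume (closedBall a r) = 1 := by
        rw [inter_comm Q, ENNReal.div_add_div_same, measure_diff_add_inter _ hQ,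
          ENNReal.div_self hvne hvtop]
      have hfin : volume (Q ∩ closedBall a r) / volume (closedBall a r) ≠ ∞ :=
        (ENNReal.div_lt_top ((measure_mono inter_subset_right).trans_lt measure_closedBall_lt_top).ne hvne).ne
      exact (ENNReal.eq_sub_of_add_eq hfin hsum).symm
    rw [heq, vol_ball_eq_closedBall a hr0]
    exact ENNReal.div_le_div (measure_mono hsub) le_rfl
  exact tendsto_of_tendsto_of_tendsto_of_le_of_le' tendsto_const_nhds hu0
    (Eventually.of_forall fun r => zero_le) hbound

/-- If a bounded measurable map coincides with `C¹`-smooth maps outside sets of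
arbitrarily small measure, then it is approximately differentiable a.e. -/
theorem approx_differentiable_of_C1_extensions {n m : ℕ}
    (P : Set (EuclideanSpace ℝ (Fin n))) (hP : MeasurableSet P)
    (hPb : Bornology.IsBounded P)
    (f : EuclideanSpace ℝ (Fin n) → EuclideanSpace ℝ (Fin m))
    (hf : Measurable (fun x : P => f x))
    (hext : ∀ ε : ℝ, 0 < ε →
      ∃ Q : Set (EuclideanSpace ℝ (Fin n)), IsClosed Q ∧ Q ⊆ P ∧
        volume (P \ Q) < ENNReal.ofReal ε ∧
        ∃ g : EuclideanSpace ℝ (Fin n) → EuclideanSpace ℝ (Fin m),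
          ContDiff ℝ 1 g ∧ EqOn g f Q) :
    ∀ᵐ a ∂volume, a ∈ P →
      ∃ L : EuclideanSpace ℝ (Fin n) →ₗ[ℝ] EuclideanSpace ℝ (Fin m),
        IsApproxDifferential P f a L := by
  have hchoice : ∀ k : ℕ, ∃ Q : Set (EuclideanSpace ℝ (Fin n)), IsClosed Q ∧ Q ⊆ P ∧
      volume (P \ Q) < ENNReal.ofReal (1 / (k + 1)) ∧
      ∃ g : EuclideanSpace ℝ (Fin n) → EuclideanSpace ℝ (Fin m),
        ContDiff ℝ 1 g ∧ EqOn g f Q := fun k => hext _ (by positivity)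
  choose Q hQc hQP hQm g hg hgf using hchoice
  have hN : volume (P \ ⋃ k, Q k) = 0 := by
    have hle : ∀ k : ℕ, volume (P \ ⋃ k, Q k) ≤ ENNReal.ofReal (1 / (k + 1)) := fun k =>
      le_of_lt (lt_of_le_of_lt
        (measure_mono (diff_subset_diff_right (subset_iUnion _ k))) (hQm k))
    have htend : Tendsto (fun k : ℕ => ENNReal.ofReal (1 / (k + 1))) atTop (𝓝 0) := by
      have := ENNReal.tendsto_ofReal tendsto_one_div_add_atTop_nhds_zero_nat
      simpa using this
    simpa using ge_of_tendsto' htend hle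
  have hdens : ∀ k : ℕ, ∀ᵐ a ∂(volume : Measure (EuclideanSpace ℝ (Fin n))),
      a ∈ Q k → Tendsto (fun r => volume (Q k ∩ closedBall a r) / volume (closedBall a r))
        (𝓝[>] (0 : ℝ)) (𝓝 1) := by
    intro k
    filter_upwards [Besicovitch.ae_tendsto_measure_inter_div_of_measurableSet volume
      (hQc k).measurableSet] with a hda haQ
    simpa [Set.indicator_of_mem haQ] using hda
  have hmem : ∀ᵐ a ∂(volume : Measure (EuclideanSpace ℝ (Fin n))),
      a ∉ P \ ⋃ k, Q k := measure_eq_zero_iff_ae_notMem.1 hN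
  filter_upwards [hmem, ae_all_iff.2 hdens] with a haN hadens haP
  have haU : a ∈ ⋃ k, Q k := by
    by_contra h
    exact haN ⟨haP, h⟩
  obtain ⟨k, hk⟩ := mem_iUnion.1 haU
  exact ⟨(fderiv ℝ (g k) a).toLinearMap,
    key_approx (hQc k).measurableSet (hg k) (hgf k) hk (hadens k hk)⟩
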